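/- For all integers n ≥ 1 and reals r ≥ 1, α ≥ 2, (Σ_{i=1}^{n} i^r)^α / Σ_{i=1}^{n} i^{α(r+1)-1} ≥ (Σ_{i=1}^{n+1} i^r)^α / Σ_{i=1}^{n+1} i^{α(r+1)-1}. -/

import Mathlib

open Real

/-- Four-point convexity for `x ^ p`, `1 ≤ p`: if `0 ≤ a ≤ b,c ≤ d` and
`a + d = b + c` then `b^p + c^p ≤ a^p + d^p`. -/
lemma four_point {p a b c d : ℝ} (hp : 1 ≤ p) (ha : 0 ≤ a) (hab : a ≤ b)
    (hac : a ≤ c) (hbd : b ≤ d) (hsum : a + d = b + c) :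
    b ^ p + c ^ p ≤ a ^ p + d ^ p := by
  rcases eq_or_lt_of_le (hab.trans hbd) with h | had
  · have hb : a = b := le_antisymm hab (by nlinarith)
    have hc : c = d := by nlinarith
    rw [hb, hc]
  · set t : ℝ := (d - b) / (d - a) with ht
    have hda : 0 < d - a := by linarith
    have ht0 : 0 ≤ t := div_nonneg (by linarith) hda.le
    have ht1 : t ≤ 1 := (div_le_one hda).2 (by linarith)
    have h1t : 0 ≤ 1 - t := by linarith
    have hb' : b = t * a + (1 - t) * d := by
      have e : t * (d - a) = d - b := by rw [ht]; exact div_mul_cancel₀ _ hda.ne'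
      linear_combination e
    have hc' : c = (1 - t) * a + t * d := by
      have : c = a + d - b := by linarith
      rw [this, hb']; ring
    have hd0 : (0:ℝ) ≤ d := ha.trans (hab.trans hbd)
    have C := convexOn_rpow hp
    have h₁ := C.2 (Set.mem_Ici.2 ha) (Set.mem_Ici.2 hd0) ht0 h1t (by ring)
    have h₂ := C.2 (Set.mem_Ici.2 ha) (Set.mem_Ici.2 hd0) h1t ht0 (by ring)
    simp only [smul_eq_mul] at h₁ h₂
    rw [hb', hc']
    calc (t * a + (1 - t) * d) ^ p + ((1 - t) * a + t * d) ^ p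
        ≤ (t * a ^ p + (1 - t) * d ^ p) + ((1 - t) * a ^ p + t * d ^ p) := add_le_add h₁ h₂
      _ = a ^ p + d ^ p := by ring


lemma stageB {α μ h h' : ℝ} (hα : 2 ≤ α) (hh' : 0 < h') (hh : h' ≤ h) (hμ : h ≤ μ) :
    h * ((μ + h') ^ α - (μ - h') ^ α) ≤ h' * ((μ + h) ^ α - (μ - h) ^ α) := by
  have hα1 : (1:ℝ) ≤ α := by linarith
  set W : ℝ → ℝ := fun w => α * (μ + w) ^ (α - 1) + α * (μ - w) ^ (α - 1) with hW
  have hcont : Continuous W := by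
    apply Continuous.add
    · exact continuous_const.mul ((continuous_const.add continuous_id).rpow_const
        (fun x => Or.inr (by linarith)))
    · exact continuous_const.mul ((continuous_const.sub continuous_id).rpow_const
        (fun x => Or.inr (by linarith)))
  have hint : ∀ a b : ℝ, IntervalIntegrable W MeasureTheory.volume a b :=
    fun a b => hcont.intervalIntegrable a b
  have key : ∀ v : ℝ, ∫ w in (0:ℝ)..v, W w = (μ + v) ^ α - (μ - v) ^ α := by
    intro v
    have : ∀ x ∈ Set.uIcc (0:ℝ) v,
        HasDerivAt (fun w => (μ + w) ^ α - (μ - w) ^ α) (W x) x := by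
      intro x _
      have h1 : HasDerivAt (fun w : ℝ => (μ + w) ^ α) (α * (μ + x) ^ (α - 1)) x := by
        have := (Real.hasDerivAt_rpow_const (x := μ + x) (p := α) (Or.inr hα1)).comp x
          ((hasDerivAt_id x).const_add μ)
        simpa [Function.comp_def] using this
      have h2 : HasDerivAt (fun w : ℝ => (μ - w) ^ α) (-(α * (μ - x) ^ (α - 1))) x := by
        have := (Real.hasDerivAt_rpow_const (x := μ - x) (p := α) (Or.inr hα1)).comp x
          ((hasDerivAt_id x).const_sub μ)
        simpa [Function.comp_def] using this
      exact (h1.sub h2).congr_deriv (by simp only [hW]; ring)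
    have := intervalIntegral.integral_eq_sub_of_hasDerivAt this (hint 0 v)
    simpa using this
  have hmono : ∀ v₁ v₂ : ℝ, 0 ≤ v₁ → v₁ ≤ v₂ → v₂ ≤ μ → W v₁ ≤ W v₂ := by
    intro v₁ v₂ h0 h12 h2μ
    have := four_point (p := α - 1) (a := μ - v₂) (b := μ - v₁) (c := μ + v₁) (d := μ + v₂)
      (by linarith) (by linarith) (by linarith) (by linarith) (by linarith) (by ring)
    simp only [hW]; nlinarith [this]
  -- pieces
  have hsplit : (∫ w in (0:ℝ)..h', W w) + (∫ w in h'..h, W w) = ∫ w in (0:ℝ)..h, W w :=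
    intervalIntegral.integral_add_adjacent_intervals (hint 0 h') (hint h' h)
  have hP' := intervalIntegral.integral_mono_on (μ := MeasureTheory.volume) hh'.le (hint 0 h')
    intervalIntegrable_const (fun x hx => hmono x h' hx.1 hx.2 (by linarith))
  rw [intervalIntegral.integral_const, smul_eq_mul, sub_zero] at hP'
  have hQ := intervalIntegral.integral_mono_on (μ := MeasureTheory.volume) hh
    intervalIntegrable_const (hint h' h) (fun x hx => hmono h' x hh'.le hx.1 (hx.2.trans hμ))
  rw [intervalIntegral.integral_const, smul_eq_mul] at hQ
  rw [key h'] at hP'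
  rw [key h', key h] at hsplit
  have m1 : (h - h') * ((μ + h') ^ α - (μ - h') ^ α) ≤ (h - h') * (h' * W h') :=
    mul_le_mul_of_nonneg_left hP' (by linarith)
  have m2 : h' * ((h - h') * W h') ≤ h' * ∫ w in h'..h, W w :=
    mul_le_mul_of_nonneg_left hQ hh'.le
  nlinarith [m1, m2, hsplit]


lemma DQ {α x y x' y' : ℝ} (hα : 2 ≤ α) (hy : 0 ≤ y) (hy' : 0 ≤ y')
    (hxy' : y' < x') (hd : x' - y' ≤ x - y) (hs : x' + y' ≤ x + y) :
    (x' ^ α - y' ^ α) * (x - y) ≤ (x ^ α - y ^ α) * (x' - y') := by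
  set μ : ℝ := (x + y) / 2 with hμdef
  set h : ℝ := (x - y) / 2 with hhdef
  set h' : ℝ := (x' - y') / 2 with hh'def
  have hh'0 : 0 < h' := by simp [hh'def]; linarith
  have hh'h : h' ≤ h := by simp [hh'def, hhdef]; linarith
  have hhμ : h ≤ μ := by simp [hhdef, hμdef]; linarith
  have hx : x = μ + h := by simp [hμdef, hhdef]; ring
  have hy2 : y = μ - h := by simp [hμdef, hhdef]; ring
  have hA : x' ^ α - y' ^ α ≤ (μ + h') ^ α - (μ - h') ^ α := by
    have := four_point (p := α) (a := y') (b := μ - h') (c := x') (d := μ + h')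
      (by linarith) hy' (by simp [hh'def, hμdef]; linarith) (by linarith)
      (by linarith) (by simp [hh'def]; ring)
    linarith
  have hB := stageB hα hh'0 hh'h hhμ
  have h0 : 0 < h := lt_of_lt_of_le hh'0 hh'h
  calc (x' ^ α - y' ^ α) * (x - y) = (x' ^ α - y' ^ α) * (2 * h) := by rw [hhdef]; ring
    _ ≤ ((μ + h') ^ α - (μ - h') ^ α) * (2 * h) := by
        apply mul_le_mul_of_nonneg_right hA; linarith
    _ ≤ ((μ + h) ^ α - (μ - h) ^ α) * (2 * h') := by nlinarith [hB]
    _ = (x ^ α - y ^ α) * (x' - y') := by rw [hx, hy2, hh'def]; ring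


lemma lem2ppp {r t : ℝ} (hr : 1 ≤ r) (ht0 : 0 < t) (ht1 : t ≤ 1) :
    2 * (1 - (1 - t ^ 2) ^ r) ≤ t * ((1 + t) ^ r - (1 - t) ^ r) := by
  have hr0 : (0:ℝ) ≤ r - 1 := by linarith
  set f : ℝ → ℝ := fun w => 2 * (r * t * (1 - t * w) ^ (r - 1)) with hf
  set g : ℝ → ℝ := fun w => t * (r * (1 + w) ^ (r - 1) + r * (1 - w) ^ (r - 1)) with hg
  have hfc : Continuous f := by
    apply Continuous.mul continuous_const
    exact continuous_const.mul ((continuous_const.sub (continuous_const.mul continuous_id)).rpow_const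
      (fun x => Or.inr hr0))
  have hgc : Continuous g := by
    apply Continuous.mul continuous_const
    apply Continuous.add
    · exact continuous_const.mul ((continuous_const.add continuous_id).rpow_const
        (fun x => Or.inr hr0))
    · exact continuous_const.mul ((continuous_const.sub continuous_id).rpow_const
        (fun x => Or.inr hr0))
  have keyf : ∫ w in (0:ℝ)..t, f w = 2 * (1 - (1 - t ^ 2) ^ r) := by
    have hd : ∀ x ∈ Set.uIcc (0:ℝ) t, HasDerivAt (fun w => -2 * (1 - t * w) ^ r) (f x) x := by
      intro x _
      have h1 : HasDerivAt (fun w : ℝ => 1 - t * w) (-t) x := by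
        simpa using ((hasDerivAt_id x).const_mul t).const_sub 1
      have := (Real.hasDerivAt_rpow_const (x := 1 - t * x) (p := r) (Or.inr hr)).comp x h1
      have h2 := this.const_mul (-2 : ℝ)
      exact h2.congr_deriv (by simp only [hf]; ring)
    have := intervalIntegral.integral_eq_sub_of_hasDerivAt hd (hfc.intervalIntegrable 0 t)
    rw [this]
    have e0 : 1 - t * 0 = (1:ℝ) := by ring
    have e1 : 1 - t * t = 1 - t ^ 2 := by ring
    rw [e0, e1, Real.one_rpow]; ring
  have keyg : ∫ w in (0:ℝ)..t, g w = t * ((1 + t) ^ r - (1 - t) ^ r) := by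
    have hd : ∀ x ∈ Set.uIcc (0:ℝ) t,
        HasDerivAt (fun w => t * ((1 + w) ^ r - (1 - w) ^ r)) (g x) x := by
      intro x _
      have h1 : HasDerivAt (fun w : ℝ => (1 + w) ^ r) (r * (1 + x) ^ (r - 1)) x := by
        have := (Real.hasDerivAt_rpow_const (x := 1 + x) (p := r) (Or.inr hr)).comp x
          ((hasDerivAt_id x).const_add 1)
        simpa [Function.comp_def] using this
      have h2 : HasDerivAt (fun w : ℝ => (1 - w) ^ r) (-(r * (1 - x) ^ (r - 1))) x := by
        have := (Real.hasDerivAt_rpow_const (x := 1 - x) (p := r) (Or.inr hr)).comp x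
          ((hasDerivAt_id x).const_sub 1)
        simpa [Function.comp_def] using this
      have h3 := (h1.sub h2).const_mul t
      exact h3.congr_deriv (by simp only [hg]; ring)
    have := intervalIntegral.integral_eq_sub_of_hasDerivAt hd (hgc.intervalIntegrable 0 t)
    rw [this]
    have e0 : 1 + (0:ℝ) = 1 := by ring
    have e1 : 1 - (0:ℝ) = 1 := by ring
    rw [e0, e1, Real.one_rpow]; ring
  have hpt : ∀ w ∈ Set.Icc (0:ℝ) t, f w ≤ g w := by
    intro w hw
    obtain ⟨hw0, hwt⟩ := hw
    have hw1 : w ≤ 1 := hwt.trans ht1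
    have ha : (0:ℝ) ≤ 1 + w := by linarith
    have hb : (0:ℝ) ≤ 1 - w := by linarith
    have hc : (0:ℝ) ≤ 1 - t * w := by nlinarith
    have key : 2 * (1 - t * w) ^ (r - 1) ≤ (1 + w) ^ (r - 1) + (1 - w) ^ (r - 1) := by
      have amgm : 2 * ((1 + w) * (1 - w)) ^ ((r - 1) / 2) ≤
          (1 + w) ^ (r - 1) + (1 - w) ^ (r - 1) := by
        have hsq := sq_nonneg ((1 + w) ^ ((r - 1) / 2) - (1 - w) ^ ((r - 1) / 2))
        have e1 : ((1 + w) ^ ((r - 1) / 2)) ^ (2:ℕ) = (1 + w) ^ (r - 1) := by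
          rw [← Real.rpow_natCast ((1 + w) ^ ((r - 1) / 2)) 2, ← Real.rpow_mul ha]
          norm_num
        have e2 : ((1 - w) ^ ((r - 1) / 2)) ^ (2:ℕ) = (1 - w) ^ (r - 1) := by
          rw [← Real.rpow_natCast ((1 - w) ^ ((r - 1) / 2)) 2, ← Real.rpow_mul hb]
          norm_num
        have e3 : (1 + w) ^ ((r - 1) / 2) * (1 - w) ^ ((r - 1) / 2) =
            ((1 + w) * (1 - w)) ^ ((r - 1) / 2) := (Real.mul_rpow ha hb).symm
        nlinarith [hsq, e1, e2, e3]
      have comp : (1 - t * w) ^ (r - 1) ≤ ((1 + w) * (1 - w)) ^ ((r - 1) / 2) := by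
        have e4 : (1 - t * w) ^ (r - 1) = ((1 - t * w) ^ (2:ℕ)) ^ ((r - 1) / 2) := by
          rw [← Real.rpow_natCast (1 - t * w) 2, ← Real.rpow_mul hc]
          congr 1; ring
        rw [e4]
        apply Real.rpow_le_rpow (by positivity) _ (by linarith)
        have h5 : t * w ≤ 1 := mul_le_one₀ ht1 hw0 hw1
        nlinarith [mul_le_mul_of_nonneg_right hwt hw0,
          mul_le_mul_of_nonneg_left h5 (mul_nonneg ht0.le hw0)]
      linarith
    have hrt : (0:ℝ) ≤ r * t := by positivity
    simp only [hf, hg]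
    calc 2 * (r * t * (1 - t * w) ^ (r - 1))
        = r * t * (2 * (1 - t * w) ^ (r - 1)) := by ring
      _ ≤ r * t * ((1 + w) ^ (r - 1) + (1 - w) ^ (r - 1)) := by
          exact mul_le_mul_of_nonneg_left key hrt
      _ = t * (r * (1 + w) ^ (r - 1) + r * (1 - w) ^ (r - 1)) := by ring
  have := intervalIntegral.integral_mono_on (μ := MeasureTheory.volume) ht0.le
    (hfc.intervalIntegrable 0 t) (hgc.intervalIntegrable 0 t) hpt
  rw [keyf, keyg] at this
  exact this


lemma lem2p {r A B C : ℝ} (hr : 1 ≤ r) (hC : 0 ≤ C) (hB : 0 < B) (hCB : C ≤ B)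
    (hAP : A + C = 2 * B) :
    (A ^ r + B ^ r) * (B ^ (r+1) - C ^ (r+1)) ≤ (A ^ (r+1) - B ^ (r+1)) * (B ^ r + C ^ r) := by
  set t : ℝ := (A - B) / B with htdef
  have hA : A = B * (1 + t) := by
    have e : B * t = A - B := by rw [htdef]; exact mul_div_cancel₀ _ hB.ne'
    linear_combination -e
  have hC2 : C = B * (1 - t) := by field_simp [htdef]; linarith
  have ht1 : t ≤ 1 := by
    rw [htdef, div_le_one hB]; linarith
  have ht0 : 0 ≤ t := by
    rw [htdef]; apply div_nonneg _ hB.le; linarith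
  rcases eq_or_lt_of_le ht0 with h0 | h0
  · have hab : A = B := by rw [hA, ← h0]; ring
    have hcb : C = B := by rw [hC2, ← h0]; ring
    rw [hab, hcb]
    simp
  · have key := lem2ppp hr h0 ht1
    have h1t : (0:ℝ) ≤ 1 + t := by linarith
    have h1t' : (0:ℝ) ≤ 1 - t := by linarith
    have hr1 : r + 1 ≠ 0 := by positivity
    set U : ℝ := (1 + t) ^ r with hU
    set V : ℝ := (1 - t) ^ r with hV
    have eU : A ^ r = B ^ r * U := by rw [hA, Real.mul_rpow hB.le h1t]
    have eC : C ^ r = B ^ r * V := by rw [hC2, Real.mul_rpow hB.le h1t']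
    have eB1 : B ^ (r+1) = B ^ r * B := by
      rw [Real.rpow_add' hB.le hr1, Real.rpow_one]
    have eU1 : A ^ (r+1) = B ^ r * B * (U * (1 + t)) := by
      rw [hA, Real.mul_rpow hB.le h1t, Real.rpow_add' hB.le hr1, Real.rpow_one,
        Real.rpow_add' h1t hr1, Real.rpow_one]; try ring
    have eC1 : C ^ (r+1) = B ^ r * B * (V * (1 - t)) := by
      rw [hC2, Real.mul_rpow hB.le h1t', Real.rpow_add' hB.le hr1, Real.rpow_one,
        Real.rpow_add' h1t' hr1, Real.rpow_one]; try ring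
    have eP : (1 - t ^ 2) ^ r = U * V := by
      have : 1 - t ^ 2 = (1 + t) * (1 - t) := by ring
      rw [this, Real.mul_rpow h1t h1t']
    rw [eP] at key
    have hpos : (0:ℝ) ≤ B ^ r * B ^ r * B := by positivity
    have hprod := mul_le_mul_of_nonneg_left key hpos
    rw [eU, eC, eB1, eU1, eC1]
    nlinarith [hprod]


noncomputable def Sr (r : ℝ) (n : ℕ) : ℝ := ∑ i ∈ Finset.Icc 1 n, (i : ℝ) ^ r

lemma Sr_succ (r : ℝ) (n : ℕ) : Sr r (n + 1) = Sr r n + ((n + 1 : ℕ) : ℝ) ^ r := by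
  rw [Sr, Sr, Finset.sum_Icc_succ_top (by omega)]

lemma Sr_range (r : ℝ) (hr : 1 ≤ r) (n : ℕ) :
    Sr r n = ∑ k ∈ Finset.range (n + 1), (k : ℝ) ^ r := by
  induction n with
  | zero => simp [Sr, Real.zero_rpow (by linarith : r ≠ 0)]
  | succ n ih => rw [Sr_succ, ih, Finset.sum_range_succ (fun k : ℕ => (k : ℝ) ^ r) (n + 1)]

lemma Sr_nonneg (r : ℝ) (n : ℕ) : 0 ≤ Sr r n :=
  Finset.sum_nonneg fun i _ => Real.rpow_nonneg (Nat.cast_nonneg i) r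

lemma Sr_pos (r : ℝ) (n : ℕ) (hn : 1 ≤ n) : 0 < Sr r n := by
  apply Finset.sum_pos'
  · exact fun i _ => Real.rpow_nonneg (Nat.cast_nonneg i) r
  · exact ⟨1, Finset.mem_Icc.2 ⟨le_refl 1, hn⟩, by norm_num⟩

lemma mid_mono (r : ℝ) (hr : 1 ≤ r) (m : ℕ) :
    (Sr r (m + 2) + Sr r (m + 1)) * ((m + 1 : ℕ) : ℝ) ^ (r + 1) ≤
      (Sr r (m + 1) + Sr r m) * ((m + 2 : ℕ) : ℝ) ^ (r + 1) := by
  set a : ℕ → ℝ := fun k => ((k + 1 : ℕ) : ℝ) ^ r + ((k : ℕ) : ℝ) ^ r with ha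
  set b : ℕ → ℝ := fun k => ((k + 1 : ℕ) : ℝ) ^ (r + 1) - ((k : ℕ) : ℝ) ^ (r + 1) with hb
  have hbpos : ∀ k, 0 < b k := by
    intro k
    have : ((k : ℕ) : ℝ) ^ (r + 1) < ((k + 1 : ℕ) : ℝ) ^ (r + 1) := by
      apply Real.rpow_lt_rpow (Nat.cast_nonneg k) (by push_cast; linarith) (by linarith)
    simpa [hb] using sub_pos.2 this
  have hapos : ∀ k, 0 < a k := by
    intro k
    have h1 : (0:ℝ) < ((k + 1 : ℕ) : ℝ) ^ r := by
      apply Real.rpow_pos_of_pos; push_cast; linarith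
    have h2 : (0:ℝ) ≤ ((k : ℕ) : ℝ) ^ r := Real.rpow_nonneg (Nat.cast_nonneg k) r
    simp only [ha]; linarith
  have hstep : ∀ k : ℕ, a (k + 1) * b k ≤ b (k + 1) * a k := by
    intro k
    have := lem2p (r := r) (A := ((k + 2 : ℕ) : ℝ)) (B := ((k + 1 : ℕ) : ℝ))
      (C := ((k : ℕ) : ℝ)) hr (Nat.cast_nonneg k) (by push_cast; linarith)
      (by push_cast; linarith) (by push_cast; ring)
    simp only [ha, hb]
    convert this using 3 <;> push_cast <;> ring
  -- antitone ratio
  have hq : ∀ k l : ℕ, k ≤ l → a l * b k ≤ b l * a k := by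
    intro k l hkl
    induction l with
    | zero =>
      have hk0 : k = 0 := by omega
      subst hk0
      exact le_of_eq (mul_comm _ _)
    | succ l ih =>
      rcases Nat.lt_or_ge k (l + 1) with h | h
      · have h1 := ih (by omega)
        have h2 := hstep l
        have hchain : b l * (a (l + 1) * b k) ≤ b l * (b (l + 1) * a k) := by
          nlinarith [mul_le_mul_of_nonneg_right h2 (hbpos k).le,
            mul_le_mul_of_nonneg_left h1 (hbpos (l + 1)).le]
        exact (mul_le_mul_iff_right₀ (hbpos l)).1 hchain
      · have hkeq : k = l + 1 := by omega
        rw [hkeq]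
        exact le_of_eq (mul_comm _ _)
  -- sum comparison
  have hsum : a (m + 1) * (∑ k ∈ Finset.range (m + 1), b k) ≤
      b (m + 1) * (∑ k ∈ Finset.range (m + 1), a k) := by
    rw [Finset.mul_sum, Finset.mul_sum]
    apply Finset.sum_le_sum
    intro k hk
    exact hq k (m + 1) (by have := Finset.mem_range.1 hk; omega)
  have hA : ∀ j : ℕ, (∑ k ∈ Finset.range (j + 1), a k) = Sr r (j + 1) + Sr r j := by
    intro j
    simp only [ha]
    rw [Finset.sum_add_distrib, ← Sr_range r hr j]
    congr 1
    rw [Sr_range r hr (j + 1),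
      Finset.sum_range_succ' (fun k : ℕ => (k : ℝ) ^ r) (j + 1)]
    simp [Real.zero_rpow (by linarith : r ≠ 0)]
  have hB : ∀ j : ℕ, (∑ k ∈ Finset.range (j + 1), b k) = ((j + 1 : ℕ) : ℝ) ^ (r + 1) := by
    intro j
    simp only [hb]
    rw [Finset.sum_range_sub (f := fun k => ((k : ℕ) : ℝ) ^ (r + 1))]
    simp [Real.zero_rpow (by positivity : r + 1 ≠ 0)]
  have e1 := hA m
  have e2 : (∑ k ∈ Finset.range (m + 2), a k) = Sr r (m + 2) + Sr r (m + 1) := hA (m + 1)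
  have e3 := hB m
  have e4 : (∑ k ∈ Finset.range (m + 2), b k) = ((m + 2 : ℕ) : ℝ) ^ (r + 1) := hB (m + 1)
  have expand : (∑ k ∈ Finset.range (m + 2), a k) = (∑ k ∈ Finset.range (m + 1), a k) + a (m + 1) :=
    Finset.sum_range_succ a (m + 1)
  have expandb : (∑ k ∈ Finset.range (m + 2), b k) = (∑ k ∈ Finset.range (m + 1), b k) + b (m + 1) :=
    Finset.sum_range_succ b (m + 1)
  rw [← e1, ← e2, ← e3, ← e4, expand, expandb]
  nlinarith [hsum]


lemma core (r α : ℝ) (hr : 1 ≤ r) (hα : 2 ≤ α) (m : ℕ) :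
    (Sr r (m + 2) ^ α - Sr r (m + 1) ^ α) * ((m + 1 : ℕ) : ℝ) ^ (α * (r + 1) - 1) ≤
      (Sr r (m + 1) ^ α - Sr r m ^ α) * ((m + 2 : ℕ) : ℝ) ^ (α * (r + 1) - 1) := by
  have hP1 : (0:ℝ) < ((m + 1 : ℕ) : ℝ) := by push_cast; linarith
  have hP2 : (0:ℝ) < ((m + 2 : ℕ) : ℝ) := by push_cast; linarith
  set P1 : ℝ := ((m + 1 : ℕ) : ℝ)
  set P2 : ℝ := ((m + 2 : ℕ) : ℝ)
  have hK1 : (0:ℝ) < P1 ^ (r + 1) := Real.rpow_pos_of_pos hP1 _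
  have hK2 : (0:ℝ) < P2 ^ (r + 1) := Real.rpow_pos_of_pos hP2 _
  have hS0 : 0 ≤ Sr r m := Sr_nonneg r m
  have hS1 : 0 ≤ Sr r (m + 1) := Sr_nonneg r (m + 1)
  have hS2 : 0 ≤ Sr r (m + 2) := Sr_nonneg r (m + 2)
  have eS1 : Sr r (m + 1) = Sr r m + P1 ^ r := Sr_succ r m
  have eS2 : Sr r (m + 2) = Sr r (m + 1) + P2 ^ r := Sr_succ r (m + 1)
  have eK1 : P1 ^ (r + 1) = P1 ^ r * P1 := by
    rw [Real.rpow_add hP1, Real.rpow_one]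
  have eK2 : P2 ^ (r + 1) = P2 ^ r * P2 := by
    rw [Real.rpow_add hP2, Real.rpow_one]
  have ex : Sr r (m + 1) / P1 ^ (r + 1) - Sr r m / P1 ^ (r + 1) = 1 / P1 := by
    rw [div_sub_div_same, eS1, eK1, add_sub_cancel_left, ← div_div,
      div_self (Real.rpow_pos_of_pos hP1 r).ne']
  have ex' : Sr r (m + 2) / P2 ^ (r + 1) - Sr r (m + 1) / P2 ^ (r + 1) = 1 / P2 := by
    rw [div_sub_div_same, eS2, eK2, add_sub_cancel_left, ← div_div,
      div_self (Real.rpow_pos_of_pos hP2 r).ne']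
  have D := DQ (x := Sr r (m + 1) / P1 ^ (r + 1)) (y := Sr r m / P1 ^ (r + 1))
    (x' := Sr r (m + 2) / P2 ^ (r + 1)) (y' := Sr r (m + 1) / P2 ^ (r + 1)) hα
    (div_nonneg hS0 hK1.le) (div_nonneg hS1 hK2.le)
    (by
      apply div_lt_div_of_pos_right _ hK2
      rw [eS2]
      nlinarith [Real.rpow_pos_of_pos hP2 r])
    (by rw [ex, ex']
        exact one_div_le_one_div_of_le hP1 (by exact_mod_cast Nat.cast_le.2 (by omega)))
    (by
      rw [← add_div, ← add_div]
      rw [div_le_div_iff₀ hK2 hK1]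
      exact mid_mono r hr m)
  rw [ex, ex'] at D
  rw [Real.div_rpow hS2 hK2.le, Real.div_rpow hS1 hK2.le, Real.div_rpow hS1 hK1.le,
    Real.div_rpow hS0 hK1.le, div_sub_div_same, div_sub_div_same,
    div_mul_div_comm, div_mul_div_comm, mul_one, mul_one,
    div_le_div_iff₀ (by positivity) (by positivity)] at D
  have idA : P1 ^ (α * (r + 1) - 1) = (P1 ^ (r + 1)) ^ α / P1 := by
    rw [eq_div_iff (ne_of_gt hP1), ← Real.rpow_mul hP1.le (r + 1) α]
    rw [show P1 ^ (α * (r + 1) - 1) * P1 = P1 ^ (α * (r + 1) - 1) * P1 ^ (1:ℝ) by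
      rw [Real.rpow_one], ← Real.rpow_add hP1]
    congr 1; ring
  have idB : P2 ^ (α * (r + 1) - 1) = (P2 ^ (r + 1)) ^ α / P2 := by
    rw [eq_div_iff (ne_of_gt hP2), ← Real.rpow_mul hP2.le (r + 1) α]
    rw [show P2 ^ (α * (r + 1) - 1) * P2 = P2 ^ (α * (r + 1) - 1) * P2 ^ (1:ℝ) by
      rw [Real.rpow_one], ← Real.rpow_add hP2]
    congr 1; ring
  rw [idA, idB, ← mul_div_assoc, ← mul_div_assoc, div_le_div_iff₀ hP1 hP2]
  nlinarith [D]

lemma gmono (r α : ℝ) (hr : 1 ≤ r) (hα : 2 ≤ α) :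
    ∀ k l : ℕ, k ≤ l →
      (Sr r (l + 1) ^ α - Sr r l ^ α) * ((k + 1 : ℕ) : ℝ) ^ (α * (r + 1) - 1) ≤
        (Sr r (k + 1) ^ α - Sr r k ^ α) * ((l + 1 : ℕ) : ℝ) ^ (α * (r + 1) - 1) := by
  have hpow : ∀ j : ℕ, (0:ℝ) < ((j + 1 : ℕ) : ℝ) ^ (α * (r + 1) - 1) := by
    intro j
    apply Real.rpow_pos_of_pos
    push_cast; linarith
  intro k l hkl
  induction l with
  | zero =>
    have hk0 : k = 0 := by omega
    subst hk0
    exact le_of_eq rfl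
  | succ l ih =>
    rcases Nat.lt_or_ge k (l + 1) with h | h
    · have h1 := ih (by omega)
      have h2 := core r α hr hα l
      have hchain : ((l + 1 : ℕ) : ℝ) ^ (α * (r + 1) - 1) *
          ((Sr r (l + 2) ^ α - Sr r (l + 1) ^ α) * ((k + 1 : ℕ) : ℝ) ^ (α * (r + 1) - 1)) ≤
          ((l + 1 : ℕ) : ℝ) ^ (α * (r + 1) - 1) *
          ((Sr r (k + 1) ^ α - Sr r k ^ α) * ((l + 2 : ℕ) : ℝ) ^ (α * (r + 1) - 1)) := by
        nlinarith [mul_le_mul_of_nonneg_right h2 (hpow k).le,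
          mul_le_mul_of_nonneg_left h1 (hpow (l + 1)).le]
      exact (mul_le_mul_iff_right₀ (hpow l)).1 hchain
    · have hkeq : k = l + 1 := by omega
      subst hkeq
      exact le_of_eq rfl

theorem stmt_13 (n : ℕ) (hn : 1 ≤ n) (r α : ℝ) (hr : 1 ≤ r) (hα : 2 ≤ α) :
    (∑ i ∈ Finset.Icc 1 (n + 1), (i : ℝ) ^ r) ^ α /
        ∑ i ∈ Finset.Icc 1 (n + 1), (i : ℝ) ^ (α * (r + 1) - 1) ≤
    (∑ i ∈ Finset.Icc 1 n, (i : ℝ) ^ r) ^ α /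
        ∑ i ∈ Finset.Icc 1 n, (i : ℝ) ^ (α * (r + 1) - 1) := by
  have hs1 : 1 ≤ α * (r + 1) - 1 := by nlinarith
  have hTn : (0:ℝ) < Sr (α * (r + 1) - 1) n := Sr_pos (α * (r + 1) - 1) n hn
  have hTn1 : (0:ℝ) < Sr (α * (r + 1) - 1) (n + 1) := Sr_pos (α * (r + 1) - 1) (n + 1) (by omega)
  show Sr r (n + 1) ^ α / Sr (α * (r + 1) - 1) (n + 1) ≤
    Sr r n ^ α / Sr (α * (r + 1) - 1) n
  rw [div_le_div_iff₀ hTn1 hTn]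
  have hT := Sr_succ (α * (r + 1) - 1) n
  have key : (Sr r (n + 1) ^ α - Sr r n ^ α) * Sr (α * (r + 1) - 1) n ≤
      Sr r n ^ α * ((n + 1 : ℕ) : ℝ) ^ (α * (r + 1) - 1) := by
    have hTsum : Sr (α * (r + 1) - 1) n =
        ∑ k ∈ Finset.range n, ((k + 1 : ℕ) : ℝ) ^ (α * (r + 1) - 1) := by
      rw [Sr_range (α * (r + 1) - 1) hs1 n,
        Finset.sum_range_succ' (fun k : ℕ => (k : ℝ) ^ (α * (r + 1) - 1)) n]
      simp [Real.zero_rpow (by linarith : α * (r + 1) - 1 ≠ 0)]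
    have hSsum : Sr r n ^ α = ∑ k ∈ Finset.range n, (Sr r (k + 1) ^ α - Sr r k ^ α) := by
      rw [Finset.sum_range_sub (f := fun k => Sr r k ^ α)]
      have h0 : Sr r 0 = 0 := by simp [Sr]
      rw [h0, Real.zero_rpow (by linarith : α ≠ 0), sub_zero]
    calc (Sr r (n + 1) ^ α - Sr r n ^ α) * Sr (α * (r + 1) - 1) n
        = ∑ k ∈ Finset.range n,
            ((Sr r (n + 1) ^ α - Sr r n ^ α) * ((k + 1 : ℕ) : ℝ) ^ (α * (r + 1) - 1)) := by
          rw [hTsum, Finset.mul_sum]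
      _ ≤ ∑ k ∈ Finset.range n,
            ((Sr r (k + 1) ^ α - Sr r k ^ α) * ((n + 1 : ℕ) : ℝ) ^ (α * (r + 1) - 1)) := by
          apply Finset.sum_le_sum
          intro k hk
          exact gmono r α hr hα k n (by have := Finset.mem_range.1 hk; omega)
      _ = (∑ k ∈ Finset.range n, (Sr r (k + 1) ^ α - Sr r k ^ α)) *
            ((n + 1 : ℕ) : ℝ) ^ (α * (r + 1) - 1) := (Finset.sum_mul _ _ _).symm
      _ = Sr r n ^ α * ((n + 1 : ℕ) : ℝ) ^ (α * (r + 1) - 1) := by rw [← hSsum]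
  rw [hT]
  nlinarith [key]
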